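/- arXiv:1511.08627 — 3 statements merged into one kernel-verified Lean document; each statement's English description precedes it below -/
import Mathlib

section
/- Let r₁,…,rₙ and e₁,…,eₙ be positive reals with decreasing order statistics r_{(1)} ≥ … ≥ r_{(n)} and e_{(1)} ≥ … ≥ e_{(n)}. Let δ : (0,∞) → ℝ and suppose x ↦ x² − δ(x) is strictly increasing on an interval containing {r_{(l)}, …, r_{(1)}}, and eⱼ² ≥ rⱼ² − δ(rⱼ) for all j with rⱼ ≥ r_{(l)}. Then e_{(l)}² ≥ r_{(l)}² − δ(r_{(l)}). -/
open Finset in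
lemma countP_eq_card' (K : List ℝ) (a : ℝ) :
    K.countP (fun x => a ≤ x) = (univ.filter fun j : Fin K.length => a ≤ K[j]).card := by
  induction K with
  | nil => simp
  | cons b K ih =>
    rw [List.countP_cons, ih, Finset.card_filter, Finset.card_filter]
    rw [show ∑ i : Fin (b :: K).length, (if a ≤ (b :: K)[i] then 1 else 0)
        = (if a ≤ b then 1 else 0) + ∑ i : Fin K.length, (if a ≤ K[i] then 1 else 0) from
      Fin.sum_univ_succ _]
    simp [add_comm]

open Finset in
lemma countP_ofFn_eq_card {n : ℕ} (f : Fin n → ℝ) (a : ℝ) :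
    (List.ofFn f).countP (fun x => a ≤ x) =
      (univ.filter fun j : Fin n => a ≤ f j).card := by
  induction n with
  | zero => simp
  | succ m ih =>
    rw [List.ofFn_succ, List.countP_cons, ih]
    rw [Finset.card_filter, Finset.card_filter, Fin.sum_univ_succ]
    simp [add_comm]

lemma sorted_desc' {n : ℕ} (f : Fin n → ℝ) (i j : ℕ)
    (hi : i < ((List.ofFn f).mergeSort (fun a b => b ≤ a)).length)
    (hj : j < ((List.ofFn f).mergeSort (fun a b => b ≤ a)).length) (hij : i ≤ j) :
    ((List.ofFn f).mergeSort (fun a b => b ≤ a))[j] ≤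
      ((List.ofFn f).mergeSort (fun a b => b ≤ a))[i] := by
  rcases eq_or_lt_of_le hij with rfl | hij
  · rfl
  have h := List.pairwise_mergeSort (le := fun a b : ℝ => decide (b ≤ a))
    (by intro a b c; simp; intro h1 h2; linarith)
    (by intro a b; simp [le_total]) (List.ofFn f)
  have := List.pairwise_iff_getElem.mp h i j hi hj hij
  simpa using this

open Finset in
/-- Lemma A: at least i+1 indices j with L[i] ≤ f j. -/
lemma card_ge_of_orderStat {n : ℕ} (f : Fin n → ℝ) (i : ℕ)
    (hi : i < ((List.ofFn f).mergeSort (fun a b => b ≤ a)).length) :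
    i + 1 ≤ (univ.filter fun j : Fin n =>
      ((List.ofFn f).mergeSort (fun a b => b ≤ a))[i] ≤ f j).card := by
  set L := (List.ofFn f).mergeSort (fun a b => b ≤ a) with hL
  have hperm : L.Perm (List.ofFn f) := List.mergeSort_perm _ _
  have hcount : L.countP (fun x => L[i] ≤ x) = (List.ofFn f).countP (fun x => L[i] ≤ x) :=
    hperm.countP_eq _
  rw [← countP_ofFn_eq_card, ← hcount, countP_eq_card']
  have hsub : Finset.Iic (⟨i, hi⟩ : Fin L.length)
      ⊆ univ.filter fun j : Fin L.length => L[i] ≤ L[j] := by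
    intro j hj
    simp only [mem_Iic, Fin.le_def] at hj
    simp only [mem_filter, mem_univ, true_and]
    exact sorted_desc' f j i j.isLt hi hj
  have hcard := Finset.card_le_card hsub
  have := Fin.card_Iic (⟨i, hi⟩ : Fin L.length)
  simp only [this] at hcard
  exact hcard

open Finset in
/-- Lemma B -/
lemma orderStat_ge_of_card {n : ℕ} (f : Fin n → ℝ) (i : ℕ) (a : ℝ)
    (hi : i < ((List.ofFn f).mergeSort (fun a b => b ≤ a)).length)
    (h : i + 1 ≤ (univ.filter fun j : Fin n => a ≤ f j).card) :
    a ≤ ((List.ofFn f).mergeSort (fun a b => b ≤ a))[i] := by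
  set L := (List.ofFn f).mergeSort (fun a b => b ≤ a) with hL
  by_contra hlt
  push_neg at hlt
  have hperm : L.Perm (List.ofFn f) := List.mergeSort_perm _ _
  have h1 : (univ.filter fun j : Fin n => a ≤ f j).card
      = (univ.filter fun j : Fin L.length => a ≤ L[j]).card := by
    rw [← countP_ofFn_eq_card, ← hperm.countP_eq, countP_eq_card']
  rw [h1] at h
  have hsub : (univ.filter fun j : Fin L.length => a ≤ L[j])
      ⊆ Finset.Iio (⟨i, hi⟩ : Fin L.length) := by
    intro j hj
    simp only [mem_filter, mem_univ, true_and] at hj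
    simp only [mem_Iio, Fin.lt_def]
    by_contra hji
    push_neg at hji
    have hd : L[j] ≤ L[i] := sorted_desc' f i j hi j.isLt hji
    have hlt' : L[i] < a := hlt
    linarith
  have hcard := Finset.card_le_card hsub
  have := Fin.card_Iio (⟨i, hi⟩ : Fin L.length)
  simp only [this] at hcard
  omega


/-- The `i`-th (0-based) largest value among `r 0, …, r (n-1)` (decreasing order statistic). -/
noncomputable def orderStatDesc {n : ℕ} (r : Fin n → ℝ) (i : ℕ) : ℝ :=
  ((List.ofFn r).mergeSort (fun a b => b ≤ a)).getD i 0

/-- If `x ↦ x² − δ(x)` is strictly increasing on an interval containing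
`{r_{(l)}, …, r_{(1)}}` and `eⱼ² ≥ rⱼ² − δ(rⱼ)` for all `j` with `rⱼ ≥ r_{(l)}`,
then `e_{(l)}² ≥ r_{(l)}² − δ(r_{(l)})`. -/
theorem orderStat_sq_ge_of_sq_ge {n : ℕ} (r e : Fin n → ℝ)
    (hrpos : ∀ j, 0 < r j) (hepos : ∀ j, 0 < e j)
    (δ : ℝ → ℝ) (l : ℕ) (hl1 : 1 ≤ l) (hln : l ≤ n)
    (I : Set ℝ) (hI : I.OrdConnected)
    (hmemI : orderStatDesc r (l - 1) ∈ I ∧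
      ∀ j, orderStatDesc r (l - 1) ≤ r j → r j ∈ I)
    (hmono : StrictMonoOn (fun x => x ^ 2 - δ x) I)
    (hge : ∀ j, orderStatDesc r (l - 1) ≤ r j → (r j) ^ 2 - δ (r j) ≤ (e j) ^ 2) :
    (orderStatDesc r (l - 1)) ^ 2 - δ (orderStatDesc r (l - 1)) ≤
      (orderStatDesc e (l - 1)) ^ 2 := by
  classical
  obtain ⟨htI, hrI⟩ := hmemI
  have hlen_r : l - 1 < ((List.ofFn r).mergeSort (fun a b => b ≤ a)).length := by
    rw [List.length_mergeSort, List.length_ofFn]; omega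
  have hlen_e : l - 1 < ((List.ofFn e).mergeSort (fun a b => b ≤ a)).length := by
    rw [List.length_mergeSort, List.length_ofFn]; omega
  have hr_eq : orderStatDesc r (l - 1)
      = ((List.ofFn r).mergeSort (fun a b => b ≤ a))[l - 1] := by
    unfold orderStatDesc
    exact List.getD_eq_getElem _ _ hlen_r
  have he_eq : orderStatDesc e (l - 1)
      = ((List.ofFn e).mergeSort (fun a b => b ≤ a))[l - 1] := by
    unfold orderStatDesc
    exact List.getD_eq_getElem _ _ hlen_e
  set t := orderStatDesc r (l - 1) with ht
  set c : ℝ := t ^ 2 - δ t with hc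
  rcases le_or_gt c 0 with hc0 | hc0
  · exact hc0.trans (sq_nonneg _)
  · set a : ℝ := Real.sqrt c with ha
    have ha0 : 0 ≤ a := Real.sqrt_nonneg _
    have ha2 : a ^ 2 = c := Real.sq_sqrt hc0.le
    have key : ∀ j, t ≤ r j → a ≤ e j := by
      intro j hj
      have h1 : c ≤ (r j) ^ 2 - δ (r j) := by
        rcases eq_or_lt_of_le hj with heq | hlt
        · rw [← heq]
        · exact (hmono htI (hrI j hj) hlt).le
      have h2 : c ≤ (e j) ^ 2 := h1.trans (hge j hj)
      calc a = Real.sqrt c := rfl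
      _ ≤ Real.sqrt ((e j) ^ 2) := Real.sqrt_le_sqrt h2
      _ = e j := Real.sqrt_sq (hepos j).le
    have hcard_r : l ≤ (Finset.univ.filter fun j : Fin n => t ≤ r j).card := by
      have := card_ge_of_orderStat r (l - 1) hlen_r
      rw [← hr_eq] at this
      omega
    have hcard_e : l ≤ (Finset.univ.filter fun j : Fin n => a ≤ e j).card := by
      refine hcard_r.trans (Finset.card_le_card ?_)
      intro j hj
      simp only [Finset.mem_filter, Finset.mem_univ, true_and] at hj ⊢
      exact key j hj
    have hfin : a ≤ orderStatDesc e (l - 1) := by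
      rw [he_eq]
      exact orderStat_ge_of_card e (l - 1) a hlen_e (by omega)
    calc c = a ^ 2 := ha2.symm
    _ ≤ (orderStatDesc e (l - 1)) ^ 2 := pow_le_pow_left₀ ha0 hfin 2
end

section
/- Lemma (bound on ε): Let X₁,…,Xₙ ∈ ℝ^d, μ, μ̂ ∈ ℝ^d, Σ, Σ̂ invertible positive definite d×d matrices. Define Rᵢ = d_Σ(Xᵢ, μ), Eᵢ = d_{Σ̂}(Xᵢ, μ̂), with decreasing order statistics R_{(i,n)} and E_{(i,n)}, and ε_{(i,n)} = E_{(i,n)}² − R_{(i,n)}². Let M = max{λ_max·A, √λ_max·(2‖μ‖A + B), A‖μ‖² + B‖μ‖ + C} with A = ‖Σ⁻¹ − Σ̂⁻¹‖, B = (‖μ̂‖+‖μ‖)‖Σ⁻¹ − Σ̂⁻¹‖ + (‖Σ̂⁻¹‖+‖Σ⁻¹‖)‖μ − μ̂‖, C = ‖μ‖²‖Σ⁻¹ − Σ̂⁻¹‖ + (‖μ‖+‖μ̂‖)‖Σ̂⁻¹‖‖μ − μ̂‖, and λ_max the largest eigenvalue of Σ. If M < 1 and R_{(l,n)} > M/(2(1−M))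 for some 1 ≤ l ≤ n, then |ε_{(l,n)}| ≤ δ(R_{(l,n)}), where δ(x) = Mx² + Mx + M. -/
/-- Mahalanobis distance relative to `A`: `d_A(x,y) = ⟨x−y, A⁻¹(x−y)⟩^{1/2}`. -/
noncomputable def mahalanobis {d : ℕ} (A : Matrix (Fin d) (Fin d) ℝ)
    (x y : EuclideanSpace ℝ (Fin d)) : ℝ :=
  Real.sqrt (inner ℝ (x - y)
    ((WithLp.equiv 2 (Fin d → ℝ)).symm (A⁻¹.mulVec (WithLp.equiv 2 (Fin d → ℝ) (x - y)))) : ℝ)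

/-- Operator norm of a real matrix (as an operator on Euclidean space). -/
noncomputable def matOpNorm {d : ℕ} (A : Matrix (Fin d) (Fin d) ℝ) : ℝ :=
  ‖Matrix.toEuclideanCLM (𝕜 := ℝ) A‖

namespace OrderStatAux

lemma sorted_ms (L : List ℝ) : (L.mergeSort (fun a b => b ≤ a)).Pairwise (fun a b : ℝ => b ≤ a) := by
  have := List.pairwise_mergeSort (le := fun a b : ℝ => decide (b ≤ a))
    (fun a b c h₁ h₂ => by simp_all; linarith)
    (fun a b => by simpa using le_total b a) L
  simpa using this

lemma length_ms {n : ℕ} (r : Fin n → ℝ) :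
    ((List.ofFn r).mergeSort (fun a b => b ≤ a)).length = n := by
  rw [List.length_mergeSort, List.length_ofFn]

lemma getD_eq {n : ℕ} (r : Fin n → ℝ) {k : ℕ} (hk : k < n) :
    orderStatDesc r k = ((List.ofFn r).mergeSort (fun a b => b ≤ a))[k]'(by
      rw [length_ms]; exact hk) := by
  rw [orderStatDesc, List.getD_eq_getElem]

lemma sorted_le {n : ℕ} (r : Fin n → ℝ) {i j : ℕ} (hij : i ≤ j) (hj : j < n) :
    ((List.ofFn r).mergeSort (fun a b => b ≤ a))[j]'(by rw [length_ms]; exact hj) ≤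
    ((List.ofFn r).mergeSort (fun a b => b ≤ a))[i]'(by rw [length_ms]; omega) := by
  rcases eq_or_lt_of_le hij with rfl | h
  · exact le_refl _
  · exact List.pairwise_iff_getElem.mp (sorted_ms (List.ofFn r)) i j _ _ h

/-- membership -/
lemma exists_eq {n : ℕ} (r : Fin n → ℝ) {k : ℕ} (hk : k < n) :
    ∃ i, orderStatDesc r k = r i := by
  rw [getD_eq r hk]
  have hmem : ((List.ofFn r).mergeSort (fun a b => b ≤ a))[k]'(by rw [length_ms]; exact hk)
      ∈ (List.ofFn r) := by
    exact (List.mergeSort_perm (List.ofFn r) _).mem_iff.mp (List.getElem_mem _)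
  obtain ⟨i, hi⟩ := List.mem_ofFn.mp hmem
  exact ⟨i, hi.symm⟩

/-- if at least k+1 values satisfy `c ≤ r i` then `c ≤ orderStat k` -/
lemma le_orderStat {n : ℕ} (r : Fin n → ℝ) {k : ℕ} (hk : k < n) {c : ℝ}
    (h : k + 1 ≤ (List.ofFn r).countP (fun x => decide (c ≤ x))) :
    c ≤ orderStatDesc r k := by
  by_contra hlt
  push_neg at hlt
  set L := (List.ofFn r).mergeSort (fun a b => b ≤ a) with hL
  have hlen : L.length = n := length_ms r
  have hcount : (List.ofFn r).countP (fun x => decide (c ≤ x)) = L.countP _ :=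
    ((List.mergeSort_perm (List.ofFn r) _).countP_eq _).symm
  rw [hcount] at h
  have hsplit : L = L.take k ++ L.drop k := (List.take_append_drop k L).symm
  rw [hsplit, List.countP_append] at h
  have h2 : (L.drop k).countP (fun x => decide (c ≤ x)) = 0 := by
    rw [List.countP_eq_zero]
    intro a ha
    obtain ⟨j, hj, hja⟩ := List.mem_iff_getElem.mp ha
    have hjlen : k + j < n := by
      have := hj; rw [List.length_drop, hlen] at this; omega
    have : a = L[k + j]'(by omega) := by
      rw [← hja, List.getElem_drop]
    have hle : L[k+j]'(by omega) ≤ L[k]'(by omega) := sorted_le r (Nat.le_add_right k j) hjlen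
    rw [getD_eq r hk] at hlt
    simp only [decide_eq_true_eq]
    push_neg
    calc a = L[k+j]'(by omega) := this
    _ ≤ L[k]'(by omega) := hle
    _ < c := hlt
  have h1 : (L.take k).countP (fun x => decide (c ≤ x)) ≤ k := by
    calc (L.take k).countP _ ≤ (L.take k).length := List.countP_le_length
    _ ≤ k := by rw [List.length_take]; omega
  omega

/-- if at most k values satisfy `c < r i` then `orderStat k ≤ c` -/
lemma orderStat_le {n : ℕ} (r : Fin n → ℝ) {k : ℕ} (hk : k < n) {c : ℝ}
    (h : (List.ofFn r).countP (fun x => decide (c < x)) ≤ k) :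
    orderStatDesc r k ≤ c := by
  by_contra hlt
  push_neg at hlt
  set L := (List.ofFn r).mergeSort (fun a b => b ≤ a) with hL
  have hlen : L.length = n := length_ms r
  have hcount : (List.ofFn r).countP (fun x => decide (c < x)) = L.countP _ :=
    ((List.mergeSort_perm (List.ofFn r) _).countP_eq _).symm
  rw [hcount] at h
  have hsplit : L = L.take (k+1) ++ L.drop (k+1) := (List.take_append_drop (k+1) L).symm
  rw [hsplit, List.countP_append] at h
  have h1 : (L.take (k+1)).countP (fun x => decide (c < x)) = (L.take (k+1)).length := by
    rw [List.countP_eq_length]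
    intro a ha
    obtain ⟨j, hj, hja⟩ := List.mem_iff_getElem.mp ha
    have hjk : j < k + 1 := by
      have := hj; rw [List.length_take] at this; omega
    have hjn : j < n := by omega
    have : a = L[j]'(by omega) := by rw [← hja, List.getElem_take]
    have hge : L[k]'(by omega) ≤ L[j]'(by omega) := sorted_le r (by omega) hk
    rw [getD_eq r hk] at hlt
    simp only [decide_eq_true_eq]
    calc c < L[k]'(by omega) := hlt
    _ ≤ L[j]'(by omega) := hge
    _ = a := this.symm
  have h2 : k + 1 ≤ (L.take (k+1)).length := by
    rw [List.length_take]; omega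
  omega

/-- the order statistic itself: at least k+1 values are ≥ it -/
lemma count_ge_self {n : ℕ} (r : Fin n → ℝ) {k : ℕ} (hk : k < n) :
    k + 1 ≤ (List.ofFn r).countP (fun x => decide (orderStatDesc r k ≤ x)) := by
  set L := (List.ofFn r).mergeSort (fun a b => b ≤ a) with hL
  have hlen : L.length = n := length_ms r
  have hcount : (List.ofFn r).countP (fun x => decide (orderStatDesc r k ≤ x)) = L.countP _ :=
    ((List.mergeSort_perm (List.ofFn r) _).countP_eq _).symm
  rw [hcount]
  have hsplit : L = L.take (k+1) ++ L.drop (k+1) := (List.take_append_drop (k+1) L).symm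
  rw [hsplit, List.countP_append]
  have h1 : (L.take (k+1)).countP (fun x => decide (orderStatDesc r k ≤ x))
      = (L.take (k+1)).length := by
    rw [List.countP_eq_length]
    intro a ha
    obtain ⟨j, hj, hja⟩ := List.mem_iff_getElem.mp ha
    have hjk : j < k + 1 := by
      have := hj; rw [List.length_take] at this; omega
    have : a = L[j]'(by omega) := by rw [← hja, List.getElem_take]
    have hge : L[k]'(by omega) ≤ L[j]'(by omega) := sorted_le r (by omega) hk
    rw [getD_eq r hk]
    simp only [decide_eq_true_eq]
    rw [this]; exact hge
  have h2 : (L.take (k+1)).length = k + 1 := by rw [List.length_take]; omega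
  omega

/-- at most k values are > the order statistic -/
lemma count_gt_self {n : ℕ} (r : Fin n → ℝ) {k : ℕ} (hk : k < n) :
    (List.ofFn r).countP (fun x => decide (orderStatDesc r k < x)) ≤ k := by
  set L := (List.ofFn r).mergeSort (fun a b => b ≤ a) with hL
  have hlen : L.length = n := length_ms r
  have hcount : (List.ofFn r).countP (fun x => decide (orderStatDesc r k < x)) = L.countP _ :=
    ((List.mergeSort_perm (List.ofFn r) _).countP_eq _).symm
  rw [hcount]
  have hsplit : L = L.take k ++ L.drop k := (List.take_append_drop k L).symm
  rw [hsplit, List.countP_append]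
  have h2 : (L.drop k).countP (fun x => decide (orderStatDesc r k < x)) = 0 := by
    rw [List.countP_eq_zero]
    intro a ha
    obtain ⟨j, hj, hja⟩ := List.mem_iff_getElem.mp ha
    have hjlen : k + j < n := by
      have := hj; rw [List.length_drop, hlen] at this; omega
    have : a = L[k + j]'(by omega) := by rw [← hja, List.getElem_drop]
    have hle : L[k+j]'(by omega) ≤ L[k]'(by omega) := sorted_le r (Nat.le_add_right k j) hjlen
    rw [getD_eq r hk]
    simp only [decide_eq_true_eq]
    push_neg
    rw [this]; exact hle
  have h1 : (L.take k).countP (fun x => decide (orderStatDesc r k < x)) ≤ k := by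
    calc (L.take k).countP _ ≤ (L.take k).length := List.countP_le_length
    _ ≤ k := by rw [List.length_take]; omega
  omega

/-- pointwise implication gives count comparison -/
lemma countP_le_countP {n : ℕ} (r e : Fin n → ℝ) (P Q : ℝ → Bool)
    (h : ∀ i, Q (r i) → P (e i)) :
    (List.ofFn r).countP Q ≤ (List.ofFn e).countP P := by
  rw [List.ofFn_eq_map, List.ofFn_eq_map, List.countP_map, List.countP_map]
  exact List.countP_mono_left (fun i _ => h i)

end OrderStatAux

namespace MahAux
variable {d : ℕ}

lemma clm_apply (A : Matrix (Fin d) (Fin d) ℝ) (u : EuclideanSpace ℝ (Fin d)) :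
    Matrix.toEuclideanCLM (𝕜 := ℝ) A u
      = (WithLp.equiv 2 (Fin d → ℝ)).symm (A.mulVec (WithLp.equiv 2 (Fin d → ℝ) u)) := by
  apply (WithLp.equiv 2 (Fin d → ℝ)).injective
  simp [Matrix.ofLp_toEuclideanCLM, Matrix.toLin'_apply]

lemma mah_eq (A : Matrix (Fin d) (Fin d) ℝ) (x y : EuclideanSpace ℝ (Fin d)) :
    mahalanobis A x y
      = Real.sqrt (inner ℝ (x - y) (Matrix.toEuclideanCLM (𝕜 := ℝ) A⁻¹ (x - y)) : ℝ) := by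
  rw [mahalanobis, clm_apply]

lemma inner_clm (A : Matrix (Fin d) (Fin d) ℝ) (u : EuclideanSpace ℝ (Fin d)) :
    (inner ℝ u (Matrix.toEuclideanCLM (𝕜 := ℝ) A u) : ℝ)
      = dotProduct (WithLp.equiv 2 (Fin d → ℝ) u)
          (A.mulVec (WithLp.equiv 2 (Fin d → ℝ) u)) := by
  rw [clm_apply]
  simp [PiLp.inner_apply, RCLike.inner_apply, dotProduct]
  exact Finset.sum_congr rfl fun _ _ => mul_comm _ _

lemma q_nonneg {A : Matrix (Fin d) (Fin d) ℝ} (hA : A.PosSemidef)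
    (u : EuclideanSpace ℝ (Fin d)) :
    0 ≤ (inner ℝ u (Matrix.toEuclideanCLM (𝕜 := ℝ) A u) : ℝ) := by
  rw [inner_clm]
  simpa using hA.dotProduct_mulVec_nonneg (WithLp.equiv 2 (Fin d → ℝ) u)

lemma clm_symm {A : Matrix (Fin d) (Fin d) ℝ} (hA : A.IsHermitian)
    (x y : EuclideanSpace ℝ (Fin d)) :
    (inner ℝ (Matrix.toEuclideanCLM (𝕜 := ℝ) A x) y : ℝ)
      = inner ℝ x (Matrix.toEuclideanCLM (𝕜 := ℝ) A y) := by
  have h := (Matrix.isHermitian_iff_isSymmetric.mp hA) x y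
  simpa [← Matrix.coe_toEuclideanCLM_eq_toEuclideanLin] using h

lemma norm_sq_le_lam_mul {S : Matrix (Fin d) (Fin d) ℝ} (hS : S.PosDef) {lam : ℝ}
    (hmax : IsGreatest (Set.range hS.isHermitian.eigenvalues) lam)
    (u : EuclideanSpace ℝ (Fin d)) :
    ‖u‖ ^ 2 ≤ lam * (inner ℝ u (Matrix.toEuclideanCLM (𝕜 := ℝ) S⁻¹ u) : ℝ) := by
  set b := hS.isHermitian.eigenvectorBasis with hb
  set lamf := hS.isHermitian.eigenvalues with hlamf
  have hdet : IsUnit S.det := hS.det_pos.ne'.isUnit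
  -- CLM S on basis vectors
  have hSb : ∀ j, Matrix.toEuclideanCLM (𝕜 := ℝ) S (b j) = lamf j • b j := by
    intro j
    apply (WithLp.equiv 2 (Fin d → ℝ)).injective
    simp only [WithLp.equiv_apply, Matrix.ofLp_toEuclideanCLM, WithLp.ofLp_smul]
    have := hS.isHermitian.mulVec_eigenvectorBasis j
    convert this using 1
  have hid : ∀ v : EuclideanSpace ℝ (Fin d),
      Matrix.toEuclideanCLM (𝕜 := ℝ) S⁻¹ (Matrix.toEuclideanCLM (𝕜 := ℝ) S v) = v := by
    intro v
    have h1 : Matrix.toEuclideanCLM (𝕜 := ℝ) (S⁻¹ * S) v = v := by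
      rw [Matrix.nonsing_inv_mul S hdet, map_one]; rfl
    rwa [map_mul, ContinuousLinearMap.mul_apply] at h1
  have hinv : ∀ j, Matrix.toEuclideanCLM (𝕜 := ℝ) S⁻¹ (b j) = (lamf j)⁻¹ • b j := by
    intro j
    have hpos := hS.eigenvalues_pos j
    have h1 : Matrix.toEuclideanCLM (𝕜 := ℝ) S ((lamf j)⁻¹ • b j) = b j := by
      rw [map_smul, hSb j, smul_smul, inv_mul_cancel₀ hpos.ne', one_smul]
    conv_lhs => rw [← h1]
    rw [hid]
  have hrepr : ∀ j, b.repr (Matrix.toEuclideanCLM (𝕜 := ℝ) S⁻¹ u) j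
      = (lamf j)⁻¹ * b.repr u j := by
    intro j
    rw [OrthonormalBasis.repr_apply_apply, OrthonormalBasis.repr_apply_apply,
      ← clm_symm hS.inv.isHermitian (b j) u, hinv j, real_inner_smul_left]
  have e1 : (inner ℝ u (Matrix.toEuclideanCLM (𝕜 := ℝ) S⁻¹ u) : ℝ)
      = ∑ j, b.repr u j * ((lamf j)⁻¹ * b.repr u j) := by
    rw [← b.repr.inner_map_map u (Matrix.toEuclideanCLM (𝕜 := ℝ) S⁻¹ u)]
    simp only [PiLp.inner_apply, RCLike.inner_apply, starRingEnd_apply, star_trivial]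
    exact Finset.sum_congr rfl fun j _ => by rw [hrepr j]; ring
  have e2 : ‖u‖ ^ 2 = ∑ j, b.repr u j * b.repr u j := by
    rw [← b.repr.norm_map u, ← real_inner_self_eq_norm_sq]
    simp only [PiLp.inner_apply, RCLike.inner_apply, starRingEnd_apply, star_trivial]
  rw [e1, e2, Finset.mul_sum]
  apply Finset.sum_le_sum
  intro j _
  have h1 : 0 < lamf j := hS.eigenvalues_pos j
  have h2 : lamf j ≤ lam := hmax.2 ⟨j, rfl⟩
  set r := b.repr u j
  calc r * r = (lamf j * (lamf j)⁻¹) * (r * r) := by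
        rw [mul_inv_cancel₀ h1.ne', one_mul]
  _ ≤ (lam * (lamf j)⁻¹) * (r * r) := by
        apply mul_le_mul_of_nonneg_right
          (mul_le_mul_of_nonneg_right h2 (inv_pos.mpr h1).le) (mul_self_nonneg r)
  _ = lam * (r * ((lamf j)⁻¹ * r)) := by ring

lemma quad_diff_bound (S Shat : Matrix (Fin d) (Fin d) ℝ)
    (hS : S.PosDef) (hShat : Shat.PosDef) (x μ μhat : EuclideanSpace ℝ (Fin d)) :
    |(inner ℝ (x - μhat) (Matrix.toEuclideanCLM (𝕜 := ℝ) Shat⁻¹ (x - μhat)) : ℝ)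
      - (inner ℝ (x - μ) (Matrix.toEuclideanCLM (𝕜 := ℝ) S⁻¹ (x - μ)) : ℝ)|
    ≤ matOpNorm (S⁻¹ - Shat⁻¹) * ‖x‖ ^ 2
      + ((‖μhat‖ + ‖μ‖) * matOpNorm (S⁻¹ - Shat⁻¹)
        + (matOpNorm Shat⁻¹ + matOpNorm S⁻¹) * ‖μ - μhat‖) * ‖x‖
      + (‖μ‖ ^ 2 * matOpNorm (S⁻¹ - Shat⁻¹)
        + (‖μ‖ + ‖μhat‖) * matOpNorm Shat⁻¹ * ‖μ - μhat‖) := by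
  set P := Matrix.toEuclideanCLM (𝕜 := ℝ) S⁻¹ with hP
  set Ph := Matrix.toEuclideanCLM (𝕜 := ℝ) Shat⁻¹ with hPh
  set DC := Matrix.toEuclideanCLM (𝕜 := ℝ) (S⁻¹ - Shat⁻¹) with hDCdef
  have hDC : ∀ z, DC z = P z - Ph z := by
    intro z
    rw [hDCdef, hP, hPh, map_sub]
    rfl
  have hAeq : matOpNorm (S⁻¹ - Shat⁻¹) = ‖DC‖ := rfl
  have hPheq : matOpNorm Shat⁻¹ = ‖Ph‖ := rfl
  have hPeq : matOpNorm S⁻¹ = ‖P‖ := rfl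
  rw [hAeq, hPheq, hPeq]
  have hsym1 : (inner ℝ (Ph μhat) x : ℝ) = inner ℝ μhat (Ph x) :=
    clm_symm hShat.inv.isHermitian _ _
  have hsym2 : (inner ℝ (P μ) x : ℝ) = inner ℝ μ (P x) :=
    clm_symm hS.inv.isHermitian _ _
  set v := Ph μhat - P μ with hv
  have expand : (inner ℝ (x - μhat) (Ph (x - μhat)) : ℝ) - inner ℝ (x - μ) (P (x - μ))
      = -(inner ℝ x (DC x) : ℝ) - (inner ℝ x v : ℝ) - (inner ℝ v x : ℝ)
        + ((inner ℝ μhat (Ph μhat) : ℝ) - (inner ℝ μ (P μ) : ℝ)) := by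
    simp only [hv, map_sub, inner_sub_left, inner_sub_right, hDC]
    linarith [hsym1, hsym2]
  rw [expand]
  -- individual bounds
  have hb1 : |(inner ℝ x (DC x) : ℝ)| ≤ ‖DC‖ * ‖x‖ ^ 2 := by
    calc |(inner ℝ x (DC x) : ℝ)| ≤ ‖x‖ * ‖DC x‖ := abs_real_inner_le_norm _ _
    _ ≤ ‖x‖ * (‖DC‖ * ‖x‖) := by
        apply mul_le_mul_of_nonneg_left (DC.le_opNorm x) (norm_nonneg x)
    _ = ‖DC‖ * ‖x‖ ^ 2 := by ring
  have hv1 : ‖v‖ ≤ ‖Ph‖ * ‖μ - μhat‖ + ‖DC‖ * ‖μ‖ := by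
    have hveq : v = Ph (μhat - μ) - DC μ := by
      rw [hv, map_sub, hDC]; abel
    rw [hveq]
    calc ‖Ph (μhat - μ) - DC μ‖ ≤ ‖Ph (μhat - μ)‖ + ‖DC μ‖ := norm_sub_le _ _
    _ ≤ ‖Ph‖ * ‖μhat - μ‖ + ‖DC‖ * ‖μ‖ := add_le_add (Ph.le_opNorm _) (DC.le_opNorm _)
    _ = ‖Ph‖ * ‖μ - μhat‖ + ‖DC‖ * ‖μ‖ := by rw [norm_sub_rev]
  have hv2 : ‖v‖ ≤ ‖DC‖ * ‖μhat‖ + ‖P‖ * ‖μ - μhat‖ := by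
    have hveq : v = P (μhat - μ) - DC μhat := by
      rw [hv, map_sub, hDC]; abel
    rw [hveq]
    calc ‖P (μhat - μ) - DC μhat‖ ≤ ‖P (μhat - μ)‖ + ‖DC μhat‖ := norm_sub_le _ _
    _ ≤ ‖P‖ * ‖μhat - μ‖ + ‖DC‖ * ‖μhat‖ := add_le_add (P.le_opNorm _) (DC.le_opNorm _)
    _ = ‖DC‖ * ‖μhat‖ + ‖P‖ * ‖μ - μhat‖ := by rw [norm_sub_rev]; ring
  have hb2 : |(inner ℝ x v : ℝ)| ≤ (‖Ph‖ * ‖μ - μhat‖ + ‖DC‖ * ‖μ‖) * ‖x‖ := by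
    calc |(inner ℝ x v : ℝ)| ≤ ‖x‖ * ‖v‖ := abs_real_inner_le_norm _ _
    _ ≤ ‖x‖ * (‖Ph‖ * ‖μ - μhat‖ + ‖DC‖ * ‖μ‖) :=
        mul_le_mul_of_nonneg_left hv1 (norm_nonneg x)
    _ = _ := by ring
  have hb3 : |(inner ℝ v x : ℝ)| ≤ (‖DC‖ * ‖μhat‖ + ‖P‖ * ‖μ - μhat‖) * ‖x‖ := by
    calc |(inner ℝ v x : ℝ)| ≤ ‖v‖ * ‖x‖ := abs_real_inner_le_norm _ _
    _ ≤ (‖DC‖ * ‖μhat‖ + ‖P‖ * ‖μ - μhat‖) * ‖x‖ :=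
        mul_le_mul_of_nonneg_right hv2 (norm_nonneg x)
  have hb4 : |(inner ℝ μhat (Ph μhat) : ℝ) - (inner ℝ μ (P μ) : ℝ)|
      ≤ ‖μ‖ ^ 2 * ‖DC‖ + (‖μ‖ + ‖μhat‖) * ‖Ph‖ * ‖μ - μhat‖ := by
    have hid2 : (inner ℝ μhat (Ph μhat) : ℝ) - (inner ℝ μ (P μ) : ℝ)
        = (inner ℝ (μhat - μ) (Ph μhat) : ℝ) + (inner ℝ μ (Ph (μhat - μ)) : ℝ)
          - (inner ℝ μ (DC μ) : ℝ) := by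
      simp only [map_sub, inner_sub_left, inner_sub_right, hDC]
      ring
    rw [hid2]
    have t1 : |(inner ℝ (μhat - μ) (Ph μhat) : ℝ)| ≤ ‖μ - μhat‖ * (‖Ph‖ * ‖μhat‖) := by
      calc |(inner ℝ (μhat - μ) (Ph μhat) : ℝ)| ≤ ‖μhat - μ‖ * ‖Ph μhat‖ :=
            abs_real_inner_le_norm _ _
      _ ≤ ‖μhat - μ‖ * (‖Ph‖ * ‖μhat‖) :=
            mul_le_mul_of_nonneg_left (Ph.le_opNorm _) (norm_nonneg _)
      _ = ‖μ - μhat‖ * (‖Ph‖ * ‖μhat‖) := by rw [norm_sub_rev]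
    have t2 : |(inner ℝ μ (Ph (μhat - μ)) : ℝ)| ≤ ‖μ‖ * (‖Ph‖ * ‖μ - μhat‖) := by
      calc |(inner ℝ μ (Ph (μhat - μ)) : ℝ)| ≤ ‖μ‖ * ‖Ph (μhat - μ)‖ :=
            abs_real_inner_le_norm _ _
      _ ≤ ‖μ‖ * (‖Ph‖ * ‖μhat - μ‖) :=
            mul_le_mul_of_nonneg_left (Ph.le_opNorm _) (norm_nonneg _)
      _ = ‖μ‖ * (‖Ph‖ * ‖μ - μhat‖) := by rw [norm_sub_rev]
    have t3 : |(inner ℝ μ (DC μ) : ℝ)| ≤ ‖DC‖ * ‖μ‖ ^ 2 := by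
      calc |(inner ℝ μ (DC μ) : ℝ)| ≤ ‖μ‖ * ‖DC μ‖ := abs_real_inner_le_norm _ _
      _ ≤ ‖μ‖ * (‖DC‖ * ‖μ‖) := mul_le_mul_of_nonneg_left (DC.le_opNorm _) (norm_nonneg _)
      _ = ‖DC‖ * ‖μ‖ ^ 2 := by ring
    have habs2 : |(inner ℝ (μhat - μ) (Ph μhat) : ℝ) + (inner ℝ μ (Ph (μhat - μ)) : ℝ)|
        ≤ |(inner ℝ (μhat - μ) (Ph μhat) : ℝ)| + |(inner ℝ μ (Ph (μhat - μ)) : ℝ)| := abs_add_le _ _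
    have habs : |(inner ℝ (μhat - μ) (Ph μhat) : ℝ) + (inner ℝ μ (Ph (μhat - μ)) : ℝ)
          - (inner ℝ μ (DC μ) : ℝ)|
        ≤ |(inner ℝ (μhat - μ) (Ph μhat) : ℝ) + (inner ℝ μ (Ph (μhat - μ)) : ℝ)|
          + |(inner ℝ μ (DC μ) : ℝ)| := abs_sub _ _
    calc |(inner ℝ (μhat - μ) (Ph μhat) : ℝ) + (inner ℝ μ (Ph (μhat - μ)) : ℝ)
          - (inner ℝ μ (DC μ) : ℝ)|
        ≤ ‖μ - μhat‖ * (‖Ph‖ * ‖μhat‖) + ‖μ‖ * (‖Ph‖ * ‖μ - μhat‖) + ‖DC‖ * ‖μ‖ ^ 2 := by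
          linarith
    _ = ‖μ‖ ^ 2 * ‖DC‖ + (‖μ‖ + ‖μhat‖) * ‖Ph‖ * ‖μ - μhat‖ := by ring
  have hfinal := abs_add_le (-(inner ℝ x (DC x) : ℝ) - (inner ℝ x v : ℝ) - (inner ℝ v x : ℝ))
    ((inner ℝ μhat (Ph μhat) : ℝ) - (inner ℝ μ (P μ) : ℝ))
  have h5 : |(-(inner ℝ x (DC x) : ℝ) - (inner ℝ x v : ℝ) - (inner ℝ v x : ℝ))|
      ≤ |(inner ℝ x (DC x) : ℝ)| + |(inner ℝ x v : ℝ)| + |(inner ℝ v x : ℝ)| := by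
    calc _ ≤ |(-(inner ℝ x (DC x) : ℝ) - (inner ℝ x v : ℝ))| + |(inner ℝ v x : ℝ)| := abs_sub _ _
    _ ≤ |(-(inner ℝ x (DC x) : ℝ))| + |(inner ℝ x v : ℝ)| + |(inner ℝ v x : ℝ)| := by
        linarith [abs_sub (-(inner ℝ x (DC x) : ℝ)) (inner ℝ x v : ℝ)]
    _ = _ := by rw [abs_neg]
  have hsum : |(-(inner ℝ x (DC x) : ℝ) - (inner ℝ x v : ℝ) - (inner ℝ v x : ℝ))
        + ((inner ℝ μhat (Ph μhat) : ℝ) - (inner ℝ μ (P μ) : ℝ))|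
      ≤ ‖DC‖ * ‖x‖ ^ 2 + ((‖Ph‖ * ‖μ - μhat‖ + ‖DC‖ * ‖μ‖) * ‖x‖
        + (‖DC‖ * ‖μhat‖ + ‖P‖ * ‖μ - μhat‖) * ‖x‖)
        + (‖μ‖ ^ 2 * ‖DC‖ + (‖μ‖ + ‖μhat‖) * ‖Ph‖ * ‖μ - μhat‖) := by
    linarith
  calc |(-(inner ℝ x (DC x) : ℝ) - (inner ℝ x v : ℝ) - (inner ℝ v x : ℝ))
        + ((inner ℝ μhat (Ph μhat) : ℝ) - (inner ℝ μ (P μ) : ℝ))|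
      ≤ ‖DC‖ * ‖x‖ ^ 2 + ((‖Ph‖ * ‖μ - μhat‖ + ‖DC‖ * ‖μ‖) * ‖x‖
        + (‖DC‖ * ‖μhat‖ + ‖P‖ * ‖μ - μhat‖) * ‖x‖)
        + (‖μ‖ ^ 2 * ‖DC‖ + (‖μ‖ + ‖μhat‖) * ‖Ph‖ * ‖μ - μhat‖) := hsum
  _ = ‖DC‖ * ‖x‖ ^ 2 + ((‖μhat‖ + ‖μ‖) * ‖DC‖ + (‖Ph‖ + ‖P‖) * ‖μ - μhat‖) * ‖x‖
        + (‖μ‖ ^ 2 * ‖DC‖ + (‖μ‖ + ‖μhat‖) * ‖Ph‖ * ‖μ - μhat‖) := by ring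

end MahAux

set_option maxHeartbeats 1000000 in
open MahAux OrderStatAux in
/-- Lemma (bound on ε): if `M < 1` and `R_{(l,n)} > M/(2(1−M))` then
`|E_{(l,n)}² − R_{(l,n)}²| ≤ δ(R_{(l,n)})` with `δ(x) = Mx² + Mx + M`. -/
theorem abs_eps_le_delta {d n : ℕ}
    (X : Fin n → EuclideanSpace ℝ (Fin d))
    (μ μhat : EuclideanSpace ℝ (Fin d)) (S Shat : Matrix (Fin d) (Fin d) ℝ)
    (hSpd : S.PosDef) (hShatpd : Shat.PosDef)
    (lammax : ℝ) (hmax : IsGreatest (Set.range hSpd.isHermitian.eigenvalues) lammax)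
    (A B C M : ℝ)
    (hA : A = matOpNorm (S⁻¹ - Shat⁻¹))
    (hB : B = (‖μhat‖ + ‖μ‖) * matOpNorm (S⁻¹ - Shat⁻¹)
      + (matOpNorm Shat⁻¹ + matOpNorm S⁻¹) * ‖μ - μhat‖)
    (hC : C = ‖μ‖ ^ 2 * matOpNorm (S⁻¹ - Shat⁻¹)
      + (‖μ‖ + ‖μhat‖) * matOpNorm Shat⁻¹ * ‖μ - μhat‖)
    (hM : M = max (max (lammax * A) (Real.sqrt lammax * (2 * ‖μ‖ * A + B)))
      (A * ‖μ‖ ^ 2 + B * ‖μ‖ + C))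
    (R E : Fin n → ℝ)
    (hR : ∀ i, R i = mahalanobis S (X i) μ)
    (hE : ∀ i, E i = mahalanobis Shat (X i) μhat)
    (l : ℕ) (hl1 : 1 ≤ l) (hln : l ≤ n)
    (hM1 : M < 1)
    (hRl : M / (2 * (1 - M)) < orderStatDesc R (l - 1)) :
    |(orderStatDesc E (l - 1)) ^ 2 - (orderStatDesc R (l - 1)) ^ 2| ≤
      M * (orderStatDesc R (l - 1)) ^ 2 + M * orderStatDesc R (l - 1) + M := by
  have hk : l - 1 < n := by omega
  set k := l - 1 with hkdef
  -- basic nonnegativity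
  have hR0 : ∀ i, 0 ≤ R i := fun i => by rw [hR]; exact Real.sqrt_nonneg _
  have hE0 : ∀ i, 0 ≤ E i := fun i => by rw [hE]; exact Real.sqrt_nonneg _
  have hop : ∀ (Q : Matrix (Fin d) (Fin d) ℝ), 0 ≤ matOpNorm Q := fun _ => norm_nonneg _
  have hA0 : 0 ≤ A := hA ▸ hop _
  have hB0 : 0 ≤ B := by
    rw [hB]
    have h1 : (0:ℝ) ≤ ‖μhat‖ + ‖μ‖ := add_nonneg (norm_nonneg _) (norm_nonneg _)
    have h2 : (0:ℝ) ≤ matOpNorm Shat⁻¹ + matOpNorm S⁻¹ := add_nonneg (hop _) (hop _)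
    exact add_nonneg (mul_nonneg h1 (hop _)) (mul_nonneg h2 (norm_nonneg _))
  have hC0 : 0 ≤ C := by
    rw [hC]
    exact add_nonneg (mul_nonneg (sq_nonneg _) (hop _))
      (mul_nonneg (mul_nonneg (add_nonneg (norm_nonneg _) (norm_nonneg _)) (hop _))
        (norm_nonneg _))
  obtain ⟨j0, hj0⟩ := hmax.1
  have hlam : 0 < lammax := hj0 ▸ hSpd.eigenvalues_pos j0
  have hABC0 : 0 ≤ A * ‖μ‖ ^ 2 + B * ‖μ‖ + C :=
    add_nonneg (add_nonneg (mul_nonneg hA0 (sq_nonneg _)) (mul_nonneg hB0 (norm_nonneg _))) hC0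
  have hM0 : 0 ≤ M := le_trans hABC0 (hM ▸ le_max_right _ _)
  have hcoef1 : lammax * A ≤ M := hM ▸ le_max_of_le_left (le_max_left _ _)
  have hcoef2 : Real.sqrt lammax * (2 * ‖μ‖ * A + B) ≤ M :=
    hM ▸ le_max_of_le_left (le_max_right _ _)
  have hcoef3 : A * ‖μ‖ ^ 2 + B * ‖μ‖ + C ≤ M := hM ▸ le_max_right _ _
  set s := Real.sqrt lammax with hs
  have hs0 : 0 ≤ s := Real.sqrt_nonneg _
  have hs2 : s ^ 2 = lammax := Real.sq_sqrt hlam.le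
  -- pointwise key inequality
  have hKey : ∀ i, |E i ^ 2 - R i ^ 2| ≤ M * R i ^ 2 + M * R i + M := by
    intro i
    have hq0 : 0 ≤ (inner ℝ (X i - μ) (Matrix.toEuclideanCLM (𝕜 := ℝ) S⁻¹ (X i - μ)) : ℝ) :=
      q_nonneg hSpd.inv.posSemidef _
    have hq0' : 0 ≤ (inner ℝ (X i - μhat)
        (Matrix.toEuclideanCLM (𝕜 := ℝ) Shat⁻¹ (X i - μhat)) : ℝ) :=
      q_nonneg hShatpd.inv.posSemidef _
    have hR2 : R i ^ 2
        = (inner ℝ (X i - μ) (Matrix.toEuclideanCLM (𝕜 := ℝ) S⁻¹ (X i - μ)) : ℝ) := by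
      rw [hR, mah_eq, Real.sq_sqrt hq0]
    have hE2 : E i ^ 2
        = (inner ℝ (X i - μhat) (Matrix.toEuclideanCLM (𝕜 := ℝ) Shat⁻¹ (X i - μhat)) : ℝ) := by
      rw [hE, mah_eq, Real.sq_sqrt hq0']
    have hkey0 := quad_diff_bound S Shat hSpd hShatpd (X i) μ μhat
    rw [← hE2, ← hR2, ← hB, ← hC, ← hA] at hkey0
    -- norm bound via largest eigenvalue
    have hu : ‖X i - μ‖ ≤ s * R i := by
      have h1 : ‖X i - μ‖ ^ 2
          ≤ lammax * (inner ℝ (X i - μ) (Matrix.toEuclideanCLM (𝕜 := ℝ) S⁻¹ (X i - μ)) : ℝ) :=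
        norm_sq_le_lam_mul hSpd hmax _
      have h2 : ‖X i - μ‖ = Real.sqrt (‖X i - μ‖ ^ 2) := (Real.sqrt_sq (norm_nonneg _)).symm
      rw [h2]
      calc Real.sqrt (‖X i - μ‖ ^ 2)
          ≤ Real.sqrt (lammax *
            (inner ℝ (X i - μ) (Matrix.toEuclideanCLM (𝕜 := ℝ) S⁻¹ (X i - μ)) : ℝ)) :=
            Real.sqrt_le_sqrt h1
      _ = s * R i := by rw [Real.sqrt_mul hlam.le, hR, mah_eq]
    have hx : ‖X i‖ ≤ ‖μ‖ + s * R i := by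
      have h3 := norm_sub_norm_le (X i) μ
      linarith
    have hx0 : 0 ≤ ‖μ‖ + s * R i := le_trans (norm_nonneg _) hx
    have h1 : ‖X i‖ ^ 2 ≤ (‖μ‖ + s * R i) ^ 2 := pow_le_pow_left₀ (norm_nonneg _) hx 2
    have e : A * (‖μ‖ + s * R i) ^ 2 + B * (‖μ‖ + s * R i) + C
        = (lammax * A) * R i ^ 2 + (s * (2 * ‖μ‖ * A + B)) * R i
          + (A * ‖μ‖ ^ 2 + B * ‖μ‖ + C) := by
      rw [← hs2]; ring
    have hAx := mul_le_mul_of_nonneg_left h1 hA0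
    have hBx := mul_le_mul_of_nonneg_left hx hB0
    have hfin1 := mul_le_mul_of_nonneg_right hcoef1 (sq_nonneg (R i))
    have hfin2 := mul_le_mul_of_nonneg_right hcoef2 (hR0 i)
    linarith [hkey0]
  -- order statistics
  set ρ := orderStatDesc R k with hρdef
  set η := orderStatDesc E k with hηdef
  obtain ⟨i0, hi0⟩ := exists_eq R hk
  have hρ0 : 0 ≤ ρ := by rw [hρdef, hi0]; exact hR0 i0
  obtain ⟨i1, hi1⟩ := exists_eq E hk
  have hη0 : 0 ≤ η := by rw [hηdef, hi1]; exact hE0 i1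
  have hδ0 : 0 ≤ M * ρ ^ 2 + M * ρ + M :=
    add_nonneg (add_nonneg (mul_nonneg hM0 (sq_nonneg _)) (mul_nonneg hM0 hρ0)) hM0
  -- upper bound
  have hub : η ^ 2 ≤ ρ ^ 2 + (M * ρ ^ 2 + M * ρ + M) := by
    set c := Real.sqrt (ρ ^ 2 + (M * ρ ^ 2 + M * ρ + M)) with hc
    have hcarg : 0 ≤ ρ ^ 2 + (M * ρ ^ 2 + M * ρ + M) := by positivity
    have hc2 : c ^ 2 = ρ ^ 2 + (M * ρ ^ 2 + M * ρ + M) := Real.sq_sqrt hcarg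
    have hc0 : 0 ≤ c := Real.sqrt_nonneg _
    have himp : ∀ i, c < E i → ρ < R i := by
      intro i hci
      by_contra hcon
      push_neg at hcon
      have h1 : E i ^ 2 ≤ R i ^ 2 + (M * R i ^ 2 + M * R i + M) := by
        have h4 := (abs_le.mp (hKey i)).2
        linarith
      have h2 : R i ^ 2 + (M * R i ^ 2 + M * R i + M) ≤ ρ ^ 2 + (M * ρ ^ 2 + M * ρ + M) := by
        have t1 : 0 ≤ (ρ - R i) * (ρ + R i) :=
          mul_nonneg (sub_nonneg.mpr hcon) (add_nonneg hρ0 (hR0 i))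
        have t2 : 0 ≤ M * ((ρ - R i) * (ρ + R i)) := mul_nonneg hM0 t1
        have t3 : 0 ≤ M * (ρ - R i) := mul_nonneg hM0 (sub_nonneg.mpr hcon)
        nlinarith [t1, t2, t3]
      have h3 : c ^ 2 < E i ^ 2 := by nlinarith [hci, hc0]
      rw [hc2] at h3
      linarith
    have hcount : (List.ofFn E).countP (fun x => decide (c < x)) ≤ k := by
      calc (List.ofFn E).countP (fun x => decide (c < x))
          ≤ (List.ofFn R).countP (fun x => decide (ρ < x)) := by
            apply countP_le_countP E R _ _
            intro i h
            simp only [decide_eq_true_eq] at h ⊢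
            exact himp i h
      _ ≤ k := count_gt_self R hk
    have hηc : η ≤ c := orderStat_le E hk hcount
    calc η ^ 2 ≤ c ^ 2 := pow_le_pow_left₀ hη0 hηc 2
    _ = _ := hc2
  -- lower bound
  have hlb : ρ ^ 2 - (M * ρ ^ 2 + M * ρ + M) ≤ η ^ 2 := by
    by_cases hneg : ρ ^ 2 - (M * ρ ^ 2 + M * ρ + M) ≤ 0
    · nlinarith [sq_nonneg η]
    · push_neg at hneg
      set c := Real.sqrt (ρ ^ 2 - (M * ρ ^ 2 + M * ρ + M)) with hc
      have hcarg : 0 ≤ ρ ^ 2 - (M * ρ ^ 2 + M * ρ + M) := le_of_lt hneg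
      have hc2 : c ^ 2 = ρ ^ 2 - (M * ρ ^ 2 + M * ρ + M) := Real.sq_sqrt hcarg
      have hMρ : M < 2 * (1 - M) * ρ := by
        have h1m : (0:ℝ) < 2 * (1 - M) := by linarith
        have h2 := (div_lt_iff₀ h1m).mp hRl
        linarith
      have himp : ∀ i, ρ ≤ R i → c ≤ E i := by
        intro i hri
        have h1 : R i ^ 2 - (M * R i ^ 2 + M * R i + M) ≤ E i ^ 2 := by
          have h4 := (abs_le.mp (hKey i)).1
          linarith
        have hfac : 0 ≤ (1 - M) * (R i + ρ) - M := by
          have t0 : 0 ≤ (1 - M) * (R i - ρ) :=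
            mul_nonneg (by linarith) (sub_nonneg.mpr hri)
          nlinarith [hMρ, t0]
        have h2 : ρ ^ 2 - (M * ρ ^ 2 + M * ρ + M)
            ≤ R i ^ 2 - (M * R i ^ 2 + M * R i + M) := by
          nlinarith [mul_nonneg (sub_nonneg.mpr hri) hfac]
        have h3 : c ≤ Real.sqrt (E i ^ 2) := Real.sqrt_le_sqrt (by linarith)
        rwa [Real.sqrt_sq (hE0 i)] at h3
      have hcount : k + 1 ≤ (List.ofFn E).countP (fun x => decide (c ≤ x)) := by
        calc k + 1 ≤ (List.ofFn R).countP (fun x => decide (ρ ≤ x)) := count_ge_self R hk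
        _ ≤ (List.ofFn E).countP (fun x => decide (c ≤ x)) := by
            apply countP_le_countP R E _ _
            intro i h
            simp only [decide_eq_true_eq] at h ⊢
            exact himp i h
      have hcη : c ≤ η := le_orderStat E hk hcount
      have h5 : c ^ 2 ≤ η ^ 2 := pow_le_pow_left₀ (Real.sqrt_nonneg _) hcη 2
      linarith [hc2 ▸ h5]
  rw [abs_le]
  constructor <;> linarith
end

section
/- Lemma (uniform bound on log-ratio differences): In the setting of the ε-bound lemma, fix 1 ≤ l ≤ n, assume M < 1 and R_{(l,n)} ≥ M/(2(1−M)), and set a = M + M/R_{(l,n)} + M/R_{(l,n)}². If a < 1, then for all 1 ≤ i ≤ l: |log(E_{(i,n)}/E_{(l,n)}) − log(R_{(i,n)}/R_{(l,n)})| ≤ log(1/(1−a)). -/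
namespace LogRatioAux

open Matrix

/-! ### Quadratic form basics -/

noncomputable def qf {d : ℕ} (N : Matrix (Fin d) (Fin d) ℝ)
    (u v : EuclideanSpace ℝ (Fin d)) : ℝ :=
  (WithLp.equiv 2 (Fin d → ℝ) u) ⬝ᵥ N.mulVec (WithLp.equiv 2 (Fin d → ℝ) v)

variable {d : ℕ}

lemma inner_eq_qf (N : Matrix (Fin d) (Fin d) ℝ) (u v : EuclideanSpace ℝ (Fin d)) :
    (inner ℝ u ((WithLp.equiv 2 (Fin d → ℝ)).symm (N.mulVec (WithLp.equiv 2 (Fin d → ℝ) v))) : ℝ)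
      = qf N u v := by
  simp [qf, PiLp.inner_apply, dotProduct, RCLike.inner_apply, WithLp.equiv_symm_apply,
    WithLp.equiv_apply, mul_comm]

lemma qf_abs_le (N : Matrix (Fin d) (Fin d) ℝ) (u v : EuclideanSpace ℝ (Fin d)) :
    |qf N u v| ≤ matOpNorm N * ‖u‖ * ‖v‖ := by
  have hv : Matrix.toEuclideanCLM (𝕜 := ℝ) N v
      = (WithLp.equiv 2 (Fin d → ℝ)).symm (N.mulVec (WithLp.equiv 2 (Fin d → ℝ) v)) := by
    conv_lhs => rw [show v = (WithLp.equiv 2 (Fin d → ℝ)).symm (WithLp.equiv 2 (Fin d → ℝ) v)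
      from by simp]
    rw [WithLp.equiv_symm_apply]
    rfl
  have h : qf N u v = (inner ℝ u (Matrix.toEuclideanCLM (𝕜 := ℝ) N v) : ℝ) := by
    rw [hv, inner_eq_qf]
  rw [h]
  calc |(inner ℝ u (Matrix.toEuclideanCLM (𝕜 := ℝ) N v) : ℝ)|
      ≤ ‖u‖ * ‖Matrix.toEuclideanCLM (𝕜 := ℝ) N v‖ := abs_real_inner_le_norm _ _
    _ ≤ ‖u‖ * (matOpNorm N * ‖v‖) := by
        gcongr
        exact (Matrix.toEuclideanCLM (𝕜 := ℝ) N).le_opNorm v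
    _ = matOpNorm N * ‖u‖ * ‖v‖ := by ring

lemma qf_sub_left (N : Matrix (Fin d) (Fin d) ℝ) (u v w : EuclideanSpace ℝ (Fin d)) :
    qf N (u - v) w = qf N u w - qf N v w := by
  simp [qf, sub_dotProduct]

lemma qf_sub_right (N : Matrix (Fin d) (Fin d) ℝ) (u v w : EuclideanSpace ℝ (Fin d)) :
    qf N u (v - w) = qf N u v - qf N u w := by
  simp [qf, Matrix.mulVec_sub, dotProduct_sub]

lemma qf_matsub (N P : Matrix (Fin d) (Fin d) ℝ) (u v : EuclideanSpace ℝ (Fin d)) :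
    qf (N - P) u v = qf N u v - qf P u v := by
  simp [qf, Matrix.sub_mulVec, dotProduct_sub]

lemma qf_symm {N : Matrix (Fin d) (Fin d) ℝ} (hN : Nᵀ = N) (u v : EuclideanSpace ℝ (Fin d)) :
    qf N u v = qf N v u := by
  unfold qf
  rw [Matrix.dotProduct_mulVec, ← Matrix.mulVec_transpose, hN, dotProduct_comm]

lemma qf_decomp (P Q : Matrix (Fin d) (Fin d) ℝ) (hP : Pᵀ = P) (hQ : Qᵀ = Q)
    (x μ μh : EuclideanSpace ℝ (Fin d)) :
    qf Q (x - μh) (x - μh) - qf P (x - μ) (x - μ)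
      = -qf (P - Q) x x + qf (P - Q) x μh + qf (P - Q) x μ
        - qf P x (μh - μ) - qf Q x (μh - μ)
        + qf Q (μh - μ) μh + qf Q μ (μh - μ) - qf (P - Q) μ μ := by
  simp only [qf_sub_left, qf_sub_right, qf_matsub]
  linear_combination (-1 : ℝ) * (qf_symm hQ μh x) + (qf_symm hP μ x)

lemma qf_inv_nonneg {S : Matrix (Fin d) (Fin d) ℝ} (hS : S.PosDef)
    (u : EuclideanSpace ℝ (Fin d)) : 0 ≤ qf S⁻¹ u u := by
  have h := (hS.inv.posSemidef).dotProduct_mulVec_nonneg (WithLp.equiv 2 (Fin d → ℝ) u)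
  simpa [qf] using h

lemma mahalanobis_eq_sqrt_qf (S : Matrix (Fin d) (Fin d) ℝ)
    (x y : EuclideanSpace ℝ (Fin d)) :
    mahalanobis S x y = Real.sqrt (qf S⁻¹ (x - y) (x - y)) := by
  rw [mahalanobis, inner_eq_qf]

lemma mahalanobis_nonneg (S : Matrix (Fin d) (Fin d) ℝ) (x y : EuclideanSpace ℝ (Fin d)) :
    0 ≤ mahalanobis S x y := by
  rw [mahalanobis_eq_sqrt_qf]; exact Real.sqrt_nonneg _

lemma mahalanobis_sq {S : Matrix (Fin d) (Fin d) ℝ} (hS : S.PosDef)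
    (x y : EuclideanSpace ℝ (Fin d)) :
    mahalanobis S x y ^ 2 = qf S⁻¹ (x - y) (x - y) := by
  rw [mahalanobis_eq_sqrt_qf, Real.sq_sqrt (qf_inv_nonneg hS _)]

/-! ### Spectral bound -/

lemma norm_sq_le_lammax_qf {S : Matrix (Fin d) (Fin d) ℝ} (hS : S.PosDef)
    (lammax : ℝ) (hmax : IsGreatest (Set.range hS.isHermitian.eigenvalues) lammax)
    (u : EuclideanSpace ℝ (Fin d)) :
    ‖u‖ ^ 2 ≤ lammax * qf S⁻¹ u u := by
  classical
  set hH := hS.isHermitian with hHdef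
  set U : Matrix (Fin d) (Fin d) ℝ := (hH.eigenvectorUnitary : Matrix (Fin d) (Fin d) ℝ) with hU
  set lam : Fin d → ℝ := hH.eigenvalues with hlam
  have hlampos : ∀ i, 0 < lam i := fun i => hS.eigenvalues_pos i
  have hlamle : ∀ i, lam i ≤ lammax := fun i => hmax.2 ⟨i, rfl⟩
  have hUU : star U * U = 1 := ((Unitary.mem_iff).mp (hH.eigenvectorUnitary).2).1
  have hUU' : U * star U = 1 := ((Unitary.mem_iff).mp (hH.eigenvectorUnitary).2).2
  have hUUt : U * Uᵀ = 1 := by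
    rw [← Matrix.conjTranspose_eq_transpose_of_trivial, ← Matrix.star_eq_conjTranspose]
    exact hUU'
  have hspec : S = U * diagonal lam * star U := by
    have := hH.spectral_theorem
    simpa [hU, hlam] using this
  have hSinv : S⁻¹ = U * diagonal (fun i => (lam i)⁻¹) * star U := by
    apply Matrix.inv_eq_right_inv
    rw [hspec]
    calc U * diagonal lam * star U * (U * diagonal (fun i => (lam i)⁻¹) * star U)
        = U * diagonal lam * (star U * U) * diagonal (fun i => (lam i)⁻¹) * star U := by
          noncomm_ring
      _ = U * (diagonal lam * diagonal (fun i => (lam i)⁻¹)) * star U := by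
          rw [hUU]; noncomm_ring
      _ = 1 := by
          rw [Matrix.diagonal_mul_diagonal]
          have : (fun i => lam i * (lam i)⁻¹) = fun _ => (1:ℝ) := by
            funext i; exact mul_inv_cancel₀ (hlampos i).ne'
          rw [this, Matrix.diagonal_one, Matrix.mul_one, hUU']
  set uv : Fin d → ℝ := WithLp.equiv 2 (Fin d → ℝ) u with huv
  set w : Fin d → ℝ := (star U).mulVec uv with hw
  have hqf : qf S⁻¹ u u = w ⬝ᵥ (diagonal (fun i => (lam i)⁻¹)).mulVec w := by
    rw [qf, hSinv]
    rw [← Matrix.mulVec_mulVec, ← Matrix.mulVec_mulVec]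
    rw [Matrix.dotProduct_mulVec uv U]
    congr 1
    rw [hw, Matrix.star_eq_conjTranspose, Matrix.conjTranspose_eq_transpose_of_trivial,
      Matrix.mulVec_transpose]
  have hnorm : ‖u‖ ^ 2 = w ⬝ᵥ w := by
    have h1 : ‖u‖ ^ 2 = uv ⬝ᵥ uv := by
      rw [← real_inner_self_eq_norm_sq]
      simp [PiLp.inner_apply, dotProduct, huv, WithLp.equiv_apply]
      rw [EuclideanSpace.norm_sq_eq]; simp [sq]
    have h2 : w ⬝ᵥ w = uv ⬝ᵥ uv := by
      rw [hw, Matrix.dotProduct_mulVec, Matrix.star_eq_conjTranspose,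
        Matrix.conjTranspose_eq_transpose_of_trivial, Matrix.vecMul_transpose,
        Matrix.mulVec_mulVec, hUUt, Matrix.one_mulVec]
    rw [h1, h2]
  rw [hnorm, hqf]
  rw [dotProduct, dotProduct, Finset.mul_sum]
  apply Finset.sum_le_sum
  intro i _
  have h1 : (1:ℝ) ≤ lammax * (lam i)⁻¹ := by
    rw [← div_eq_mul_inv, le_div_iff₀ (hlampos i)]
    simpa using hlamle i
  have h2 : (diagonal (fun i => (lam i)⁻¹)).mulVec w i = (lam i)⁻¹ * w i := by
    simp [Matrix.mulVec_diagonal]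
  rw [h2]
  nlinarith [sq_nonneg (w i), h1]

lemma lammax_pos {S : Matrix (Fin d) (Fin d) ℝ} (hS : S.PosDef)
    (lammax : ℝ) (hmax : IsGreatest (Set.range hS.isHermitian.eigenvalues) lammax) :
    0 < lammax := by
  obtain ⟨i, hi⟩ := hmax.1
  rw [← hi]
  exact hS.eigenvalues_pos i

/-! ### Helper: abs of 8-fold sum -/

lemma abs_add8 (a b c e f g h k : ℝ) :
    |a + b + c + e + f + g + h + k| ≤ |a| + |b| + |c| + |e| + |f| + |g| + |h| + |k| := by
  have h1 := abs_add_le (a + b + c + e + f + g + h) k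
  have h2 := abs_add_le (a + b + c + e + f + g) h
  have h3 := abs_add_le (a + b + c + e + f) g
  have h4 := abs_add_le (a + b + c + e) f
  have h5 := abs_add_le (a + b + c) e
  have h6 := abs_add_le (a + b) c
  have h7 := abs_add_le a b
  linarith

/-! ### Pointwise ε-bound -/

lemma matOpNorm_nonneg (N : Matrix (Fin d) (Fin d) ℝ) : 0 ≤ matOpNorm N :=
  norm_nonneg _

lemma pointwise_bound {S Shat : Matrix (Fin d) (Fin d) ℝ}
    (hSpd : S.PosDef) (hShatpd : Shat.PosDef)
    (lammax : ℝ) (hmax : IsGreatest (Set.range hSpd.isHermitian.eigenvalues) lammax)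
    (A B C M : ℝ) (μ μhat : EuclideanSpace ℝ (Fin d))
    (hA : A = matOpNorm (S⁻¹ - Shat⁻¹))
    (hB : B = (‖μhat‖ + ‖μ‖) * matOpNorm (S⁻¹ - Shat⁻¹)
      + (matOpNorm Shat⁻¹ + matOpNorm S⁻¹) * ‖μ - μhat‖)
    (hC : C = ‖μ‖ ^ 2 * matOpNorm (S⁻¹ - Shat⁻¹)
      + (‖μ‖ + ‖μhat‖) * matOpNorm Shat⁻¹ * ‖μ - μhat‖)
    (hM : M = max (max (lammax * A) (Real.sqrt lammax * (2 * ‖μ‖ * A + B)))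
      (A * ‖μ‖ ^ 2 + B * ‖μ‖ + C))
    (x : EuclideanSpace ℝ (Fin d)) :
    |mahalanobis Shat x μhat ^ 2 - mahalanobis S x μ ^ 2|
      ≤ M * mahalanobis S x μ ^ 2 + M * mahalanobis S x μ + M := by
  have hStr : Sᵀ = S := by
    rw [← Matrix.conjTranspose_eq_transpose_of_trivial]; exact hSpd.isHermitian
  have hShtr : Shatᵀ = Shat := by
    rw [← Matrix.conjTranspose_eq_transpose_of_trivial]; exact hShatpd.isHermitian
  have hPsym : (S⁻¹)ᵀ = S⁻¹ := by rw [Matrix.transpose_nonsing_inv, hStr]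
  have hQsym : (Shat⁻¹)ᵀ = Shat⁻¹ := by rw [Matrix.transpose_nonsing_inv, hShtr]
  have hr0 : 0 ≤ mahalanobis S x μ := mahalanobis_nonneg _ _ _
  have hr2 : mahalanobis S x μ ^ 2 = qf S⁻¹ (x - μ) (x - μ) := mahalanobis_sq hSpd _ _
  have he2 : mahalanobis Shat x μhat ^ 2 = qf Shat⁻¹ (x - μhat) (x - μhat) :=
    mahalanobis_sq hShatpd _ _
  have hsum : mahalanobis Shat x μhat ^ 2 - mahalanobis S x μ ^ 2
      = (-qf (S⁻¹ - Shat⁻¹) x x) + qf (S⁻¹ - Shat⁻¹) x μhat + qf (S⁻¹ - Shat⁻¹) x μ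
        + (-qf S⁻¹ x (μhat - μ)) + (-qf Shat⁻¹ x (μhat - μ))
        + qf Shat⁻¹ (μhat - μ) μhat + qf Shat⁻¹ μ (μhat - μ)
        + (-qf (S⁻¹ - Shat⁻¹) μ μ) := by
    rw [he2, hr2, qf_decomp S⁻¹ Shat⁻¹ hPsym hQsym x μ μhat]
    ring
  have b1 := qf_abs_le (S⁻¹ - Shat⁻¹) x x
  have b2 := qf_abs_le (S⁻¹ - Shat⁻¹) x μhat
  have b3 := qf_abs_le (S⁻¹ - Shat⁻¹) x μ
  have b4 := qf_abs_le S⁻¹ x (μhat - μ)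
  have b5 := qf_abs_le Shat⁻¹ x (μhat - μ)
  have b6 := qf_abs_le Shat⁻¹ (μhat - μ) μhat
  have b7 := qf_abs_le Shat⁻¹ μ (μhat - μ)
  have b8 := qf_abs_le (S⁻¹ - Shat⁻¹) μ μ
  have hdm' : ‖μhat - μ‖ = ‖μ - μhat‖ := norm_sub_rev μhat μ
  rw [hdm'] at b4 b5 b6 b7
  have h8 := abs_add8 (-qf (S⁻¹ - Shat⁻¹) x x) (qf (S⁻¹ - Shat⁻¹) x μhat)
    (qf (S⁻¹ - Shat⁻¹) x μ) (-qf S⁻¹ x (μhat - μ)) (-qf Shat⁻¹ x (μhat - μ))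
    (qf Shat⁻¹ (μhat - μ) μhat) (qf Shat⁻¹ μ (μhat - μ)) (-qf (S⁻¹ - Shat⁻¹) μ μ)
  simp only [abs_neg] at h8
  rw [← hsum] at h8
  have hABC : |mahalanobis Shat x μhat ^ 2 - mahalanobis S x μ ^ 2|
      ≤ A * ‖x‖ ^ 2 + B * ‖x‖ + C := by
    rw [hA, hB, hC]
    linarith [h8, b1, b2, b3, b4, b5, b6, b7, b8]
  have hlampos : 0 < lammax := lammax_pos hSpd lammax hmax
  have hsl0 : 0 ≤ Real.sqrt lammax := Real.sqrt_nonneg _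
  have hsl2 : Real.sqrt lammax ^ 2 = lammax := Real.sq_sqrt hlampos.le
  have hspec : ‖x - μ‖ ^ 2 ≤ lammax * mahalanobis S x μ ^ 2 := by
    rw [hr2]; exact norm_sq_le_lammax_qf hSpd lammax hmax (x - μ)
  have hxmu : ‖x - μ‖ ≤ Real.sqrt lammax * mahalanobis S x μ := by
    have h1 := Real.sqrt_le_sqrt hspec
    rwa [Real.sqrt_sq (norm_nonneg _), Real.sqrt_mul hlampos.le, Real.sqrt_sq hr0] at h1
  have hnxb : ‖x‖ ≤ Real.sqrt lammax * mahalanobis S x μ + ‖μ‖ := by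
    have h1 : ‖x‖ ≤ ‖x - μ‖ + ‖μ‖ := by simpa using norm_add_le (x - μ) μ
    linarith
  have hnx0 : 0 ≤ ‖x‖ := norm_nonneg _
  have hA0 : 0 ≤ A := hA ▸ matOpNorm_nonneg _
  have hB0 : 0 ≤ B := by
    rw [hB]
    exact add_nonneg (mul_nonneg (by positivity) (matOpNorm_nonneg _))
      (mul_nonneg (add_nonneg (matOpNorm_nonneg _) (matOpNorm_nonneg _)) (norm_nonneg _))
  have hC0 : 0 ≤ C := by
    rw [hC]
    exact add_nonneg (mul_nonneg (by positivity) (matOpNorm_nonneg _))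
      (mul_nonneg (mul_nonneg (by positivity) (matOpNorm_nonneg _)) (norm_nonneg _))
  have hM1 : lammax * A ≤ M := by rw [hM]; exact le_trans (le_max_left _ _) (le_max_left _ _)
  have hM2 : Real.sqrt lammax * (2 * ‖μ‖ * A + B) ≤ M := by
    rw [hM]; exact le_trans (le_max_right _ _) (le_max_left _ _)
  have hM3 : A * ‖μ‖ ^ 2 + B * ‖μ‖ + C ≤ M := by rw [hM]; exact le_max_right _ _
  have hm0 : 0 ≤ ‖μ‖ := norm_nonneg _
  have hsr0 : 0 ≤ Real.sqrt lammax * mahalanobis S x μ + ‖μ‖ := by positivity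
  calc |mahalanobis Shat x μhat ^ 2 - mahalanobis S x μ ^ 2|
      ≤ A * ‖x‖ ^ 2 + B * ‖x‖ + C := hABC
    _ ≤ A * (Real.sqrt lammax * mahalanobis S x μ + ‖μ‖) ^ 2
        + B * (Real.sqrt lammax * mahalanobis S x μ + ‖μ‖) + C := by
        have hnx2 : ‖x‖ ^ 2 ≤ (Real.sqrt lammax * mahalanobis S x μ + ‖μ‖) ^ 2 :=
          pow_le_pow_left₀ hnx0 hnxb 2
        linarith [mul_le_mul_of_nonneg_left hnx2 hA0, mul_le_mul_of_nonneg_left hnxb hB0]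
    _ = (Real.sqrt lammax ^ 2 * A) * mahalanobis S x μ ^ 2
        + (Real.sqrt lammax * (2 * ‖μ‖ * A + B)) * mahalanobis S x μ
        + (A * ‖μ‖ ^ 2 + B * ‖μ‖ + C) := by ring
    _ ≤ M * mahalanobis S x μ ^ 2 + M * mahalanobis S x μ + M := by
        rw [hsl2]
        have t1 := mul_le_mul_of_nonneg_right hM1 (sq_nonneg (mahalanobis S x μ))
        have t2 := mul_le_mul_of_nonneg_right hM2 hr0
        linarith [hM3]

namespace OS
variable {n : ℕ}

noncomputable def sortD (f : Fin n → ℝ) : List ℝ := (List.ofFn f).mergeSort (fun a b => b ≤ a)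

lemma length_sortD (f : Fin n → ℝ) : (sortD f).length = n := by
  simp [sortD, List.length_mergeSort]

lemma perm_sortD (f : Fin n → ℝ) : (sortD f).Perm (List.ofFn f) := List.mergeSort_perm _ _

lemma sorted_sortD (f : Fin n → ℝ) : (sortD f).Pairwise (fun a b => b ≤ a) := by
  have h := List.pairwise_mergeSort (le := fun a b : ℝ => decide (b ≤ a))
    (fun a b c hab hbc => by simp_all; exact le_trans hbc hab)
    (fun a b => by simpa using le_total b a) (List.ofFn f)
  exact h.imp (fun hab => by simpa using hab)

lemma os_eq_get (f : Fin n → ℝ) {i : ℕ} (hi : i < n) :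
    orderStatDesc f i = (sortD f)[i]'(by rw [length_sortD]; exact hi) := by
  rw [orderStatDesc, List.getD_eq_getElem?_getD, List.getElem?_eq_getElem]
  · rfl

lemma exists_os_eq (f : Fin n → ℝ) {i : ℕ} (hi : i < n) : ∃ j, f j = orderStatDesc f i := by
  rw [os_eq_get f hi]
  have hm : (sortD f)[i]'(by rw [length_sortD]; exact hi) ∈ sortD f := List.getElem_mem _
  rw [(perm_sortD f).mem_iff, List.mem_ofFn] at hm
  exact hm

lemma os_antitone (f : Fin n → ℝ) {i j : ℕ} (hij : i ≤ j) (hj : j < n) :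
    orderStatDesc f j ≤ orderStatDesc f i := by
  rcases eq_or_lt_of_le hij with rfl | hlt
  · exact le_refl _
  · rw [os_eq_get f (lt_of_le_of_lt hij hj), os_eq_get f hj]
    exact (List.pairwise_iff_getElem.mp (sorted_sortD f)) i j _ _ hlt

end OS

section cnt
lemma countP_ofFn_mono {p q : ℝ → Bool} :
    ∀ {n : ℕ} (f g : Fin n → ℝ), (∀ j, p (f j) = true → q (g j) = true) →
      (List.ofFn f).countP p ≤ (List.ofFn g).countP q := by
  intro n
  induction n with
  | zero => intro f g _; simp
  | succ m ih =>
    intro f g h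
    rw [List.ofFn_succ, List.ofFn_succ, List.countP_cons, List.countP_cons]
    have h0 : (if p (f 0) then 1 else 0) ≤ (if q (g 0) then (1:ℕ) else 0) := by
      by_cases hp : p (f 0) = true
      · simp [hp, h 0 hp]
      · simp [Bool.not_eq_true] at hp
        simp [hp]
    exact Nat.add_le_add (ih _ _ (fun j => h j.succ)) h0

lemma countP_take_ge {l : List ℝ} (hs : l.Pairwise (fun a b => b ≤ a)) {i : ℕ}
    (hi : i < l.length) : i + 1 ≤ l.countP (fun x => decide (l[i] ≤ x)) := by
  have hsplit := List.countP_append (p := fun x => decide (l[i] ≤ x)) (l₁ := l.take (i+1)) (l₂ := l.drop (i+1))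
  rw [List.take_append_drop] at hsplit
  rw [hsplit]
  have hlen : (l.take (i+1)).length = i + 1 := by
    rw [List.length_take]; omega
  have hall : (l.take (i+1)).countP (fun x => decide (l[i] ≤ x)) = i + 1 := by
    rw [List.countP_eq_length.mpr, hlen]
    intro a ha
    rw [List.mem_iff_getElem] at ha
    obtain ⟨j, hj, rfl⟩ := ha
    have hj' : j < i + 1 := by rw [hlen] at hj; exact hj
    rw [List.getElem_take]
    rcases Nat.lt_or_ge j i with hlt | hge
    · exact decide_eq_true ((List.pairwise_iff_getElem.mp hs) j i _ _ hlt)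
    · have : j = i := by omega
      subst this; simp
  omega

lemma le_getElem_of_countP {l : List ℝ} (hs : l.Pairwise (fun a b => b ≤ a)) {i : ℕ}
    (hi : i < l.length) {t : ℝ}
    (h : i + 1 ≤ l.countP (fun x => decide (t ≤ x))) : t ≤ l[i] := by
  by_contra hc
  push_neg at hc
  have hsplit := List.countP_append (p := fun x => decide (t ≤ x)) (l₁ := l.take i) (l₂ := l.drop i)
  rw [List.take_append_drop] at hsplit
  rw [hsplit] at h
  have h1 : (l.take i).countP (fun x => decide (t ≤ x)) ≤ i := by
    calc (l.take i).countP _ ≤ (l.take i).length := List.countP_le_length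
      _ ≤ i := by rw [List.length_take]; omega
  have h2 : (l.drop i).countP (fun x => decide (t ≤ x)) = 0 := by
    rw [List.countP_eq_zero]
    intro a ha
    rw [List.mem_iff_getElem] at ha
    obtain ⟨k, hk, rfl⟩ := ha
    rw [List.getElem_drop]
    simp only [decide_eq_true_eq]
    push_neg
    rcases Nat.eq_or_lt_of_le (Nat.le_add_right i k) with heq | hlt
    · have hik : i + k < l.length := by
        have := (List.length_drop : (l.drop i).length = l.length - i); omega
      have : l[i + k]'hik = l[i] := by
        congr 1; omega
      rw [this]; exact hc
    · have hik : i + k < l.length := by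
        have := (List.length_drop : (l.drop i).length = l.length - i); omega
      exact lt_of_le_of_lt ((List.pairwise_iff_getElem.mp hs) i (i+k) hi hik hlt) hc
  omega
end cnt

namespace OS
variable {n : ℕ}

lemma os_mono_pointwise {f g : Fin n → ℝ} (h : ∀ j, f j ≤ g j) {i : ℕ} (hi : i < n) :
    orderStatDesc f i ≤ orderStatDesc g i := by
  have hlf : i < (sortD f).length := by rw [length_sortD]; exact hi
  have hlg : i < (sortD g).length := by rw [length_sortD]; exact hi
  rw [os_eq_get f hi, os_eq_get g hi]
  set t := (sortD f)[i] with ht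
  apply le_getElem_of_countP (sorted_sortD g) hlg
  calc i + 1 ≤ (sortD f).countP (fun x => decide (t ≤ x)) := countP_take_ge (sorted_sortD f) hlf
    _ = (List.ofFn f).countP (fun x => decide (t ≤ x)) := (perm_sortD f).countP_eq _
    _ ≤ (List.ofFn g).countP (fun x => decide (t ≤ x)) := by
        apply countP_ofFn_mono
        intro j hj
        simp only [decide_eq_true_eq] at hj ⊢
        exact le_trans hj (h j)
    _ = (sortD g).countP (fun x => decide (t ≤ x)) := ((perm_sortD g).countP_eq _).symm

lemma os_map_monotone {h : ℝ → ℝ} (hm : Monotone h) (f : Fin n → ℝ) {i : ℕ} (hi : i < n) :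
    orderStatDesc (fun j => h (f j)) i = h (orderStatDesc f i) := by
  have key : sortD (fun j => h (f j)) = (sortD f).map h := by
    have hperm : (sortD (fun j => h (f j))).Perm ((sortD f).map h) := by
      refine (perm_sortD _).trans ?_
      rw [show List.ofFn (fun j => h (f j)) = (List.ofFn f).map h from by
        rw [List.map_ofFn]; rfl]
      exact ((perm_sortD f).map h).symm
    have hs1 : (sortD (fun j => h (f j))).Pairwise (fun a b => b ≤ a) := sorted_sortD _
    have hs2 : ((sortD f).map h).Pairwise (fun a b => b ≤ a) := by
      rw [List.pairwise_map]
      exact (sorted_sortD f).imp (fun hab => hm hab)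
    haveI : Std.Antisymm (fun a b : ℝ => b ≤ a) := ⟨fun a b h1 h2 => le_antisymm h2 h1⟩
    exact List.Perm.eq_of_pairwise' hs1 hs2 hperm
  have hlf : i < (sortD f).length := by rw [length_sortD]; exact hi
  rw [os_eq_get _ hi, os_eq_get f hi]
  simp only [key]
  rw [List.getElem_map]

lemma os_nonneg {f : Fin n → ℝ} (h : ∀ j, 0 ≤ f j) {i : ℕ} (hi : i < n) :
    0 ≤ orderStatDesc f i := by
  obtain ⟨j, hj⟩ := exists_os_eq f hi
  rw [← hj]; exact h j

end OS

/-! ### Scalar monotone functions used for order statistics -/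

lemma sq_max_monotone : Monotone (fun x : ℝ => (max x 0) ^ 2) := by
  intro x y hxy
  exact pow_le_pow_left₀ (le_max_right x 0) (max_le_max hxy le_rfl) 2

lemma psi_monotone (M : ℝ) (hM0 : 0 ≤ M) :
    Monotone (fun x : ℝ => (max x 0) ^ 2 + (M * (max x 0) ^ 2 + M * (max x 0) + M)) := by
  intro x y hxy
  have hu : max x 0 ≤ max y 0 := max_le_max hxy le_rfl
  have huv2 : (max x 0) ^ 2 ≤ (max y 0) ^ 2 :=
    pow_le_pow_left₀ (le_max_right x 0) hu 2
  have h1 := mul_le_mul_of_nonneg_left huv2 hM0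
  have h2 := mul_le_mul_of_nonneg_left hu hM0
  dsimp only
  linarith

lemma g_monotone (M c : ℝ) (h1M : 0 < 1 - M) (hc2 : 2 * (1 - M) * c = M) :
    Monotone (fun x : ℝ => (max x c) ^ 2 - (M * (max x c) ^ 2 + M * (max x c) + M)) := by
  intro x y hxy
  have hu : max x c ≤ max y c := max_le_max hxy le_rfl
  have hcu : c ≤ max x c := le_max_right _ _
  have hcv : c ≤ max y c := le_max_right _ _
  have hfac : 0 ≤ (max y c - max x c) * ((1 - M) * (max x c + max y c) - M) := by
    apply mul_nonneg (by linarith)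
    have h1 : (1 - M) * (2 * c) ≤ (1 - M) * (max x c + max y c) :=
      mul_le_mul_of_nonneg_left (by linarith) h1M.le
    nlinarith [hc2]
  dsimp only
  nlinarith [hfac]

lemma g_le (M c : ℝ) (h1M : 0 < 1 - M) (hc2 : 2 * (1 - M) * c = M) (x : ℝ) :
    (max x c) ^ 2 - (M * (max x c) ^ 2 + M * (max x c) + M)
      ≤ x ^ 2 - (M * x ^ 2 + M * x + M) := by
  rcases le_total x c with hxc | hcx
  · rw [max_eq_right hxc]
    nlinarith [mul_nonneg h1M.le (sq_nonneg (x - c)), hc2]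
  · rw [max_eq_left hcx]

end LogRatioAux

set_option maxHeartbeats 1000000 in
open LogRatioAux LogRatioAux.OS in
/-- Lemma (uniform bound on log-ratio differences): in the setting of the ε-bound lemma,
if `M < 1`, `R_{(l,n)} ≥ M/(2(1−M))` and `a = M + M/R_{(l,n)} + M/R_{(l,n)}² < 1`, then for
all `1 ≤ i ≤ l`,
`|log(E_{(i,n)}/E_{(l,n)}) − log(R_{(i,n)}/R_{(l,n)})| ≤ log(1/(1−a))`. -/
theorem abs_log_ratio_diff_le {d n : ℕ}
    (X : Fin n → EuclideanSpace ℝ (Fin d))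
    (μ μhat : EuclideanSpace ℝ (Fin d)) (S Shat : Matrix (Fin d) (Fin d) ℝ)
    (hSpd : S.PosDef) (hShatpd : Shat.PosDef)
    (lammax : ℝ) (hmax : IsGreatest (Set.range hSpd.isHermitian.eigenvalues) lammax)
    (A B C M : ℝ)
    (hA : A = matOpNorm (S⁻¹ - Shat⁻¹))
    (hB : B = (‖μhat‖ + ‖μ‖) * matOpNorm (S⁻¹ - Shat⁻¹)
      + (matOpNorm Shat⁻¹ + matOpNorm S⁻¹) * ‖μ - μhat‖)
    (hC : C = ‖μ‖ ^ 2 * matOpNorm (S⁻¹ - Shat⁻¹)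
      + (‖μ‖ + ‖μhat‖) * matOpNorm Shat⁻¹ * ‖μ - μhat‖)
    (hM : M = max (max (lammax * A) (Real.sqrt lammax * (2 * ‖μ‖ * A + B)))
      (A * ‖μ‖ ^ 2 + B * ‖μ‖ + C))
    (R E : Fin n → ℝ)
    (hR : ∀ i, R i = mahalanobis S (X i) μ)
    (hE : ∀ i, E i = mahalanobis Shat (X i) μhat)
    (l : ℕ) (hl1 : 1 ≤ l) (hln : l ≤ n)
    (hM1 : M < 1)
    (hRl : M / (2 * (1 - M)) ≤ orderStatDesc R (l - 1))
    (a : ℝ)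
    (ha : a = M + M / orderStatDesc R (l - 1) + M / (orderStatDesc R (l - 1)) ^ 2)
    (ha1 : a < 1) :
    ∀ i : ℕ, 1 ≤ i → i ≤ l →
      |Real.log (orderStatDesc E (i - 1) / orderStatDesc E (l - 1))
        - Real.log (orderStatDesc R (i - 1) / orderStatDesc R (l - 1))| ≤
        Real.log (1 / (1 - a)) := by
  intro i hi1 hil
  have hli : l - 1 < n := by omega
  have hii : i - 1 < n := by omega
  have hil' : i - 1 ≤ l - 1 := by omega
  -- basic nonnegativity
  have hR0 : ∀ j, 0 ≤ R j := fun j => (hR j) ▸ mahalanobis_nonneg _ _ _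
  have hE0 : ∀ j, 0 ≤ E j := fun j => (hE j) ▸ mahalanobis_nonneg _ _ _
  have hA0 : 0 ≤ A := hA ▸ matOpNorm_nonneg _
  have hB0 : 0 ≤ B := by
    rw [hB]
    exact add_nonneg (mul_nonneg (by positivity) (matOpNorm_nonneg _))
      (mul_nonneg (add_nonneg (matOpNorm_nonneg _) (matOpNorm_nonneg _)) (norm_nonneg _))
  have hC0 : 0 ≤ C := by
    rw [hC]
    exact add_nonneg (mul_nonneg (by positivity) (matOpNorm_nonneg _))
      (mul_nonneg (mul_nonneg (by positivity) (matOpNorm_nonneg _)) (norm_nonneg _))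
  have hM0 : 0 ≤ M := by
    have h1 : 0 ≤ A * ‖μ‖ ^ 2 + B * ‖μ‖ + C := by positivity
    rw [hM]
    exact le_trans h1 (le_max_right _ _)
  have h1M : 0 < 1 - M := by linarith
  have hpoint : ∀ j, |E j ^ 2 - R j ^ 2| ≤ M * R j ^ 2 + M * R j + M := by
    intro j
    rw [hE j, hR j]
    exact pointwise_bound hSpd hShatpd lammax hmax A B C M μ μhat hA hB hC hM (X j)
  have hc2 : 2 * (1 - M) * (M / (2 * (1 - M))) = M := by
    field_simp
  have hc0 : 0 ≤ M / (2 * (1 - M)) := by positivity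
  have hs0 : 0 ≤ orderStatDesc R (l - 1) := os_nonneg hR0 hli
  -- order statistic squared bounds
  have hEsq : ∀ i' : ℕ, i' < n →
      orderStatDesc (fun j => E j ^ 2) i' = (orderStatDesc E i') ^ 2 := by
    intro i' hi'
    have h := os_map_monotone sq_max_monotone E hi'
    have hfun : (fun j => (max (E j) 0) ^ 2) = fun j => E j ^ 2 := by
      funext j; rw [max_eq_left (hE0 j)]
    rw [hfun] at h
    rw [h, max_eq_left (os_nonneg hE0 hi')]
  -- upper bound
  have keyU : ∀ i' : ℕ, i' < n →
      (orderStatDesc E i') ^ 2 ≤ (orderStatDesc R i') ^ 2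
        + (M * (orderStatDesc R i') ^ 2 + M * (orderStatDesc R i') + M) := by
    intro i' hi'
    have hψm := psi_monotone M hM0
    have hpw : ∀ j, E j ^ 2
        ≤ (max (R j) 0) ^ 2 + (M * (max (R j) 0) ^ 2 + M * (max (R j) 0) + M) := by
      intro j
      rw [max_eq_left (hR0 j)]
      have := hpoint j
      have := abs_le.mp this
      linarith [this.2]
    have hmono := os_mono_pointwise hpw hi'
    rw [hEsq i' hi'] at hmono
    have hmap := os_map_monotone hψm R hi'
    rw [hmap, max_eq_left (os_nonneg hR0 hi')] at hmono
    exact hmono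
  -- lower bound (needs c ≤ orderStat)
  have keyL : ∀ i' : ℕ, i' < n → M / (2 * (1 - M)) ≤ orderStatDesc R i' →
      (orderStatDesc R i') ^ 2
        - (M * (orderStatDesc R i') ^ 2 + M * (orderStatDesc R i') + M)
        ≤ (orderStatDesc E i') ^ 2 := by
    intro i' hi' hci'
    set c := M / (2 * (1 - M)) with hcdef
    have hgm := g_monotone M c h1M (hcdef ▸ hc2)
    have hglex : ∀ x : ℝ,
        (max x c) ^ 2 - (M * (max x c) ^ 2 + M * (max x c) + M)
          ≤ x ^ 2 - (M * x ^ 2 + M * x + M) := g_le M c h1M (hcdef ▸ hc2)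
    have hpw : ∀ j, (max (R j) c) ^ 2 - (M * (max (R j) c) ^ 2 + M * (max (R j) c) + M)
        ≤ E j ^ 2 := by
      intro j
      have h1 := hglex (R j)
      have h2 := (abs_le.mp (hpoint j)).1
      linarith
    have hmono := os_mono_pointwise hpw hi'
    rw [hEsq i' hi'] at hmono
    have hmap := os_map_monotone hgm R hi'
    rw [hmap, max_eq_left hci'] at hmono
    exact hmono
  -- case split on whether the l-th order statistic vanishes
  by_cases hs : orderStatDesc R (l - 1) = 0
  · -- then M = 0 and E = R
    have hMz : M = 0 := by
      have h1 : M / (2 * (1 - M)) ≤ 0 := hs ▸ hRl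
      have h2 : M / (2 * (1 - M)) = 0 := le_antisymm h1 hc0
      rcases div_eq_zero_iff.mp h2 with h | h
      · exact h
      · exfalso; linarith
    have hER : E = R := by
      funext j
      have h := hpoint j
      rw [hMz] at h
      simp only [zero_mul, add_zero, zero_add] at h
      have h2 : E j ^ 2 = R j ^ 2 := by
        have := abs_nonneg (E j ^ 2 - R j ^ 2)
        have h3 : |E j ^ 2 - R j ^ 2| = 0 := le_antisymm (by linarith) this
        have h4 := abs_eq_zero.mp h3
        linarith [sub_eq_zero.mp h4]
      calc E j = Real.sqrt (E j ^ 2) := (Real.sqrt_sq (hE0 j)).symm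
        _ = Real.sqrt (R j ^ 2) := by rw [h2]
        _ = R j := Real.sqrt_sq (hR0 j)
    have haz : a = 0 := by
      rw [ha, hMz, hs]
      simp
    rw [hER, haz]
    simp
  · have hs' : 0 < orderStatDesc R (l - 1) := lt_of_le_of_ne hs0 (Ne.symm hs)
    set s := orderStatDesc R (l - 1) with hsdef
    set r := orderStatDesc R (i - 1) with hrdef
    set e := orderStatDesc E (i - 1) with hedef
    set f := orderStatDesc E (l - 1) with hfdef
    have hsr : s ≤ r := os_antitone R hil' hli
    have hr' : 0 < r := lt_of_lt_of_le hs' hsr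
    have he0 : 0 ≤ e := os_nonneg hE0 hii
    have hf0 : 0 ≤ f := os_nonneg hE0 hli
    have eU := keyU (i - 1) hii
    have eL := keyL (i - 1) hii (le_trans hRl hsr)
    have fU := keyU (l - 1) hli
    have fL := keyL (l - 1) hli hRl
    rw [← hrdef, ← hedef] at eU eL
    rw [← hsdef, ← hfdef] at fU fL
    -- relate δ to a
    have ha0 : 0 ≤ a := by
      rw [ha]
      have := div_nonneg hM0 hs0
      have := div_nonneg hM0 (sq_nonneg s)
      linarith
    have h1a : 0 < 1 - a := by linarith
    have hδr : M * r ^ 2 + M * r + M ≤ a * r ^ 2 := by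
      have t1 : M * r ≤ M / s * r ^ 2 := by
        rw [div_mul_eq_mul_div, le_div_iff₀ hs']
        have hh : M * r * s ≤ M * r * r :=
          mul_le_mul_of_nonneg_left hsr (mul_nonneg hM0 hr'.le)
        linarith [hh]
      have t2 : M ≤ M / s ^ 2 * r ^ 2 := by
        rw [div_mul_eq_mul_div, le_div_iff₀ (by positivity)]
        have hs2r2 : s ^ 2 ≤ r ^ 2 := pow_le_pow_left₀ hs0 hsr 2
        linarith [mul_le_mul_of_nonneg_left hs2r2 hM0]
      have t3 : a * r ^ 2 = M * r ^ 2 + M / s * r ^ 2 + M / s ^ 2 * r ^ 2 := by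
        rw [ha]; ring
      linarith
    have hδs : M * s ^ 2 + M * s + M = a * s ^ 2 := by
      rw [ha]
      field_simp
    have key1 : (1 - a) * r ^ 2 ≤ e ^ 2 := by linarith [eL, hδr]
    have key2 : e ^ 2 ≤ (1 + a) * r ^ 2 := by linarith [eU, hδr]
    have key3 : (1 - a) * s ^ 2 ≤ f ^ 2 := by linarith [fL, hδs]
    have key4 : f ^ 2 ≤ (1 + a) * s ^ 2 := by linarith [fU, hδs]
    have he' : 0 < e := by
      rcases he0.lt_or_eq with h | h
      · exact h
      · exfalso
        have : (1 - a) * r ^ 2 > 0 := mul_pos h1a (pow_pos hr' 2)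
        rw [← h] at key1
        simp at key1
        linarith
    have hf' : 0 < f := by
      rcases hf0.lt_or_eq with h | h
      · exact h
      · exfalso
        have : (1 - a) * s ^ 2 > 0 := mul_pos h1a (pow_pos hs' 2)
        rw [← h] at key3
        simp at key3
        linarith
    -- the ratio
    have hq0 : 0 < e * s / (f * r) := by positivity
    have hlogeq : Real.log (e / f) - Real.log (r / s) = Real.log (e * s / (f * r)) := by
      rw [Real.log_div he'.ne' hf'.ne', Real.log_div hr'.ne' hs'.ne',
        Real.log_div (by positivity : (0:ℝ) < e * s).ne' (by positivity : (0:ℝ) < f * r).ne',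
        Real.log_mul he'.ne' hs'.ne', Real.log_mul hf'.ne' hr'.ne']
      ring
    have h1' : (1 - a) * f ^ 2 ≤ s ^ 2 := by
      have hh := mul_le_mul_of_nonneg_left key4 h1a.le
      linarith [hh, sq_nonneg (a * s)]
    have h2' : (1 - a) * e ^ 2 ≤ r ^ 2 := by
      have hh := mul_le_mul_of_nonneg_left key2 h1a.le
      linarith [hh, sq_nonneg (a * r)]
    have hq2a : (1 - a) ^ 2 ≤ (e * s / (f * r)) ^ 2 := by
      rw [div_pow, le_div_iff₀ (by positivity)]
      have hh : ((1 - a) * f ^ 2) * ((1 - a) * r ^ 2) ≤ s ^ 2 * e ^ 2 :=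
        mul_le_mul h1' key1 (mul_nonneg h1a.le (sq_nonneg r)) (sq_nonneg s)
      linarith [hh]
    have hq2b : (e * s / (f * r)) ^ 2 ≤ (1 / (1 - a)) ^ 2 := by
      rw [div_pow, div_pow, div_le_div_iff₀ (by positivity) (by positivity)]
      have hh : ((1 - a) * e ^ 2) * ((1 - a) * s ^ 2) ≤ r ^ 2 * f ^ 2 :=
        mul_le_mul h2' key3 (mul_nonneg h1a.le (sq_nonneg s)) (sq_nonneg r)
      linarith [hh]
    have hq1 : 1 - a ≤ e * s / (f * r) := by
      have h := Real.sqrt_le_sqrt hq2a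
      rwa [Real.sqrt_sq h1a.le, Real.sqrt_sq hq0.le] at h
    have hq3 : e * s / (f * r) ≤ 1 / (1 - a) := by
      have h := Real.sqrt_le_sqrt hq2b
      rwa [Real.sqrt_sq hq0.le, Real.sqrt_sq (by positivity)] at h
    rw [hlogeq, abs_le]
    constructor
    · rw [one_div, Real.log_inv]
      simp only [neg_neg]
      exact Real.log_le_log h1a hq1
    · exact Real.log_le_log hq0 hq3
end
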